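/- For every q with 0 < q < 1, every integer m ≥ 0 and every x ∈ [0,1], the recurrence R_{∞,q}(t^{m+1},x) = R_{∞,q}(t^m,x) − (1−x) · R_{∞,q}(t^m, v(q,x)) holds, where t^m denotes the monomial function t ↦ t^m on [0,1]. -/

import Mathlib

open Finset Filter

noncomputable section

/-- The q-integer `[n]_q = 1 + q + ⋯ + q^(n-1)`. -/
def qInt (q : ℝ) (n : ℕ) : ℝ := ∑ i ∈ Finset.range n, q ^ i

/-- The q-factorial `[n]_q!`. -/
def qFact (q : ℝ) : ℕ → ℝ
  | 0 => 1
  | n + 1 => qFact q n * qInt q (n + 1)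

/-- The q-binomial coefficient `[n k]_q`. -/
def qBinom (q : ℝ) (n k : ℕ) : ℝ := qFact q n / (qFact q k * qFact q (n - k))

/-- The Lupaş basis function `b_{nk}(q;x)`. -/
def lupasB (q : ℝ) (n k : ℕ) (x : ℝ) : ℝ :=
  qBinom q n k * q ^ (k * (k - 1) / 2) * x ^ k * (1 - x) ^ (n - k) /
    ∏ j ∈ Finset.range (n - 1), (1 - x + q ^ (j + 1) * x)

/-- The limit Lupaş basis function `b_{∞k}(q;x)` (for `0 < q < 1`, `x ∈ [0,1)`). -/
def lupasBInf (q : ℝ) (k : ℕ) (x : ℝ) : ℝ :=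
  q ^ (k * (k - 1) / 2) * (x / (1 - x)) ^ k /
    ((1 - q) ^ k * qFact q k * ∏' j : ℕ, (1 + q ^ j * (x / (1 - x))))

/-- The Lupaş q-analogue of the Bernstein operator `R_{n,q}(f,x)`. -/
def lupasR (q : ℝ) (n : ℕ) (f : ℝ → ℝ) (x : ℝ) : ℝ :=
  ∑ k ∈ Finset.range (n + 1), f (qInt q k / qInt q n) * lupasB q n k x

/-- The limit q-Lupaş operator `R_{∞,q}(f,x)` for `0 < q < 1`. -/
def lupasRInfLow (q : ℝ) (f : ℝ → ℝ) (x : ℝ) : ℝ :=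
  if x = 1 then f 1 else ∑' k : ℕ, f (1 - q ^ k) * lupasBInf q k x

/-- The limit q-Lupaş operator `R_{∞,q}(f,x)`: for `q > 1` it is defined by
reflection, `R_{∞,q}(f,x) = R_{∞,1/q}(g,1-x)` with `g(x) = f(1-x)`. -/
def lupasRInf (q : ℝ) (f : ℝ → ℝ) (x : ℝ) : ℝ :=
  if 1 < q then lupasRInfLow (1 / q) (fun t => f (1 - t)) (1 - x)
  else lupasRInfLow q f x

/-- The transform `v(q,x) = qx/(1-x+qx)`. -/
def vq (q x : ℝ) : ℝ := q * x / (1 - x + q * x)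

/-- `L_{n,q}(f,x) = R_{n,q}(f,x) - R_{∞,q}(f,x)`. -/
def lupasL (q : ℝ) (n : ℕ) (f : ℝ → ℝ) (x : ℝ) : ℝ :=
  lupasR q n f x - lupasRInf q f x

/-- The modulus of continuity `ω(f,t)` of `f` on `[0,1]`. -/
def omega1 (f : ℝ → ℝ) (t : ℝ) : ℝ :=
  sSup {d | ∃ x ∈ Set.Icc (0:ℝ) 1, ∃ y ∈ Set.Icc (0:ℝ) 1, |x - y| ≤ t ∧ d = |f x - f y|}

/-- The second modulus of smoothness `ω₂(f,t)` of `f` on `[0,1]`. -/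
def omega2 (f : ℝ → ℝ) (t : ℝ) : ℝ :=
  sSup {d | ∃ h, 0 ≤ h ∧ h ≤ t ∧ ∃ x, 0 ≤ x ∧ x ≤ 1 - 2 * h ∧
    d = |f (x + 2 * h) - 2 * f (x + h) + f x|}
lemma one_le_tprod' {f : ℕ → ℝ} (h : ∀ i, 1 ≤ f i) : (1:ℝ) ≤ ∏' i, f i := by
  by_cases hm : Multipliable f
  · refine ge_of_tendsto' hm.hasProd fun s => ?_
    calc (1:ℝ) = ∏ _i ∈ s, 1 := by simp
      _ ≤ ∏ i ∈ s, f i :=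
        Finset.prod_le_prod (fun i _ => zero_le_one) (fun i _ => h i)
  · rw [tprod_eq_one_of_not_multipliable hm]

lemma one_le_qInt (q : ℝ) (hq : 0 ≤ q) (k : ℕ) : 1 ≤ qInt q (k + 1) := by
  have : (1:ℝ) = q ^ 0 := by simp
  rw [qInt, this]
  exact Finset.single_le_sum (f := fun i => q ^ i) (fun i _ => pow_nonneg hq i)
    (Finset.mem_range.2 (Nat.succ_pos k))

lemma qFact_pos (q : ℝ) (hq : 0 ≤ q) (k : ℕ) : 0 < qFact q k := by
  induction k with
  | zero => norm_num [qFact]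
  | succ n ih => exact mul_pos ih (lt_of_lt_of_le one_pos (one_le_qInt q hq n))

lemma lq_mult (q y : ℝ) (hq0 : 0 < q) (hq1 : q < 1) (hy : 0 ≤ y) :
    Multipliable fun j : ℕ => 1 + q ^ j * y := by
  refine Real.multipliable_of_summable_log (fun n => by positivity) ?_
  show Summable fun n : ℕ => Real.log (1 + q ^ n * y)
  have hsum : Summable fun n : ℕ => q ^ n * y :=
    (summable_geometric_of_lt_one hq0.le hq1).mul_right y
  refine hsum.of_nonneg_of_le
    (fun n => Real.log_nonneg (by nlinarith [mul_nonneg (pow_nonneg hq0.le n) hy]))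
    (fun n => ?_)
  have h := Real.log_le_sub_one_of_pos (x := 1 + q ^ n * y) (by positivity)
  linarith

lemma tri_succ (k : ℕ) : (k + 1) * ((k + 1) - 1) / 2 = k * (k - 1) / 2 + k := by
  have h : (k + 1) * ((k + 1) - 1) = k * (k - 1) + k * 2 := by
    cases k with
    | zero => simp
    | succ n => simp [Nat.succ_sub_one]; ring
  rw [h, Nat.add_mul_div_right _ _ (by norm_num : (0:ℕ) < 2)]

lemma lupasBInf_succ (q x : ℝ) (k : ℕ) :
    lupasBInf q (k + 1) x =
      (q ^ k * (x / (1 - x)) / ((1 - q) * qInt q (k + 1))) * lupasBInf q k x := by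
  rw [lupasBInf, lupasBInf, tri_succ, pow_add, pow_succ, pow_succ,
    show qFact q (k+1) = qFact q k * qInt q (k+1) from rfl, div_mul_div_comm]
  congr 1 <;> ring

lemma lupasBInf_nonneg (q x : ℝ) (hq0 : 0 < q) (hq1 : q < 1) (hx0 : 0 ≤ x) (hx1 : x < 1)
    (k : ℕ) : 0 ≤ lupasBInf q k x := by
  have hy : 0 ≤ x / (1 - x) := div_nonneg hx0 (by linarith)
  have hP : (0:ℝ) ≤ ∏' j : ℕ, (1 + q ^ j * (x / (1 - x))) := by
    refine le_trans zero_le_one (one_le_tprod' fun j => ?_)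
    nlinarith [mul_nonneg (pow_nonneg hq0.le j) hy]
  have hF := qFact_pos q hq0.le k
  have h1q : (0:ℝ) ≤ 1 - q := by linarith
  have hC : (0:ℝ) ≤ q ^ (k * (k - 1) / 2) := pow_nonneg hq0.le _
  exact div_nonneg (mul_nonneg hC (pow_nonneg hy k))
    (mul_nonneg (mul_nonneg (pow_nonneg h1q k) hF.le) hP)

lemma summable_lupasBInf (q x : ℝ) (hq0 : 0 < q) (hq1 : q < 1) (hx0 : 0 ≤ x) (hx1 : x < 1) :
    Summable fun k => lupasBInf q k x := by
  have hy : 0 ≤ x / (1 - x) := div_nonneg hx0 (by linarith)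
  apply summable_of_ratio_norm_eventually_le (r := 1/2) (by norm_num)
  have htend : Tendsto (fun k : ℕ => q ^ k * (x / (1 - x)) / (1 - q)) atTop (nhds 0) := by
    have : Tendsto (fun k : ℕ => q ^ k) atTop (nhds 0) :=
      tendsto_pow_atTop_nhds_zero_of_lt_one hq0.le hq1
    simpa using (this.mul_const (x / (1 - x))).div_const (1 - q)
  filter_upwards [htend.eventually_lt_const (by norm_num : (0:ℝ) < 1/2)] with k hk
  have hb := lupasBInf_nonneg q x hq0 hq1 hx0 hx1 k
  have hb1 := lupasBInf_nonneg q x hq0 hq1 hx0 hx1 (k + 1)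
  rw [Real.norm_of_nonneg hb1, Real.norm_of_nonneg hb, lupasBInf_succ]
  have hI : 1 ≤ qInt q (k + 1) := one_le_qInt q hq0.le k
  have hc : q ^ k * (x / (1 - x)) / ((1 - q) * qInt q (k + 1)) ≤
      q ^ k * (x / (1 - x)) / (1 - q) := by
    apply div_le_div_of_nonneg_left (by positivity) (by linarith) ?_
    nlinarith
  exact mul_le_mul_of_nonneg_right (by linarith) hb

lemma key_shift (q x : ℝ) (hq0 : 0 < q) (hq1 : q < 1) (hx0 : 0 ≤ x) (hx1 : x < 1) (k : ℕ) :
    (1 - x) * lupasBInf q k (vq q x) = q ^ k * lupasBInf q k x := by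
  have h1x : (0:ℝ) < 1 - x := by linarith
  have hd : (0:ℝ) < 1 - x + q * x := by nlinarith
  set y := x / (1 - x) with hy_def
  have hy : 0 ≤ y := div_nonneg hx0 h1x.le
  have hv : vq q x / (1 - vq q x) = q * y := by
    rw [vq, hy_def]
    field_simp
    rw [show (1 - x + q * x - q * x) = 1 - x by ring, mul_div_assoc, div_self h1x.ne', mul_one]
  have hM' := lq_mult q (q * y) hq0 hq1 (mul_nonneg hq0.le hy)
  have hMs : Multipliable fun n : ℕ => 1 + q ^ (n + 1) * y := by
    refine hM'.congr fun n => ?_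
    rw [pow_succ]; ring
  have hshift : (∏' j : ℕ, (1 + q ^ j * (q * y))) = (1 - x) * ∏' j : ℕ, (1 + q ^ j * y) := by
    have h0 : (∏' j : ℕ, (1 + q ^ j * y)) = (1 + q ^ 0 * y) * ∏' j : ℕ, (1 + q ^ (j + 1) * y) :=
      tprod_eq_zero_mul' hMs
    have hcong : (∏' j : ℕ, (1 + q ^ (j + 1) * y)) = ∏' j : ℕ, (1 + q ^ j * (q * y)) := by
      refine tprod_congr fun j => ?_
      rw [pow_succ]; ring
    have h1y : 1 + q ^ 0 * y = 1 / (1 - x) := by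
      rw [pow_zero, one_mul, hy_def]; field_simp; ring
    rw [← hcong, h0, h1y, ← mul_assoc, mul_one_div, div_self h1x.ne', one_mul]
  have hF := qFact_pos q hq0.le k
  have hP : (0:ℝ) < ∏' j : ℕ, (1 + q ^ j * y) := by
    refine lt_of_lt_of_le one_pos (one_le_tprod' fun j => ?_)
    nlinarith [mul_nonneg (pow_nonneg hq0.le j) hy]
  rw [lupasBInf, lupasBInf, hv, ← hy_def, hshift, mul_pow]
  rw [show (1-q)^k * qFact q k * ((1-x) * ∏' j : ℕ, (1 + q ^ j * y)) =
      (1-x) * ((1-q)^k * qFact q k * ∏' j : ℕ, (1 + q ^ j * y)) from by ring,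
    mul_div_assoc', mul_div_mul_left _ _ h1x.ne', mul_div_assoc']
  congr 1
  ring

theorem lupasRInf_recurrence (q : ℝ) (hq0 : 0 < q) (hq1 : q < 1) (m : ℕ)
    (x : ℝ) (hx : x ∈ Set.Icc (0:ℝ) 1) :
    lupasRInf q (fun t => t ^ (m + 1)) x =
      lupasRInf q (fun t => t ^ m) x -
        (1 - x) * lupasRInf q (fun t => t ^ m) (vq q x) := by
  obtain ⟨hx0, hx1'⟩ := hx
  have hnq : ¬ (1 < q) := by linarith
  by_cases hx1 : x = 1
  · subst hx1
    simp [lupasRInf, lupasRInfLow, hnq]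
  · have hxlt : x < 1 := lt_of_le_of_ne hx1' hx1
    have h1x : (0:ℝ) < 1 - x := by linarith
    have hd : (0:ℝ) < 1 - x + q * x := by nlinarith
    have hvne : vq q x ≠ 1 := by
      rw [vq]
      intro h
      have h2 := (div_eq_iff hd.ne').1 h
      nlinarith
    simp only [lupasRInf, lupasRInfLow, if_neg hnq, if_neg hx1, if_neg hvne]
    have hB := summable_lupasBInf q x hq0 hq1 hx0 hxlt
    have hbnn : ∀ k : ℕ, 0 ≤ lupasBInf q k x := lupasBInf_nonneg q x hq0 hq1 hx0 hxlt
    have hq1k : ∀ k : ℕ, 0 ≤ 1 - q ^ k ∧ 1 - q ^ k ≤ 1 := fun k =>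
      ⟨by nlinarith [pow_le_one₀ hq0.le hq1.le (n := k)], by nlinarith [pow_pos hq0 k]⟩
    have hfle : ∀ k : ℕ, (1 - q ^ k) ^ m ≤ 1 := fun k =>
      pow_le_one₀ (hq1k k).1 (hq1k k).2
    have hfnn : ∀ k : ℕ, 0 ≤ (1 - q ^ k) ^ m := fun k => pow_nonneg (hq1k k).1 m
    have hS1 : Summable fun k : ℕ => (1 - q ^ k) ^ m * lupasBInf q k x := by
      refine hB.of_nonneg_of_le (fun k => mul_nonneg (hfnn k) (hbnn k)) fun k => ?_
      calc (1 - q ^ k) ^ m * lupasBInf q k x ≤ 1 * lupasBInf q k x :=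
            mul_le_mul_of_nonneg_right (hfle k) (hbnn k)
        _ = lupasBInf q k x := one_mul _
    have hS2 : Summable fun k : ℕ => (1 - q ^ k) ^ m * (q ^ k * lupasBInf q k x) := by
      refine hB.of_nonneg_of_le
        (fun k => mul_nonneg (hfnn k) (mul_nonneg (pow_nonneg hq0.le k) (hbnn k)))
        fun k => ?_
      have hqk1 : q ^ k ≤ 1 := pow_le_one₀ hq0.le hq1.le
      have hb := hbnn k
      have hq' : 0 ≤ q ^ k := pow_nonneg hq0.le k
      calc (1 - q ^ k) ^ m * (q ^ k * lupasBInf q k x)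
          ≤ 1 * (q ^ k * lupasBInf q k x) :=
            mul_le_mul_of_nonneg_right (hfle k) (mul_nonneg hq' hb)
        _ = q ^ k * lupasBInf q k x := one_mul _
        _ ≤ 1 * lupasBInf q k x := mul_le_mul_of_nonneg_right hqk1 hb
        _ = lupasBInf q k x := one_mul _
    have h3 : (1 - x) * ∑' k : ℕ, (1 - q ^ k) ^ m * lupasBInf q k (vq q x) =
        ∑' k : ℕ, (1 - q ^ k) ^ m * (q ^ k * lupasBInf q k x) := by
      rw [← tsum_mul_left]
      refine tsum_congr fun k => ?_
      rw [show (1 - x) * ((1 - q ^ k) ^ m * lupasBInf q k (vq q x)) =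
          (1 - q ^ k) ^ m * ((1 - x) * lupasBInf q k (vq q x)) from by ring,
        key_shift q x hq0 hq1 hx0 hxlt k]
    rw [h3, ← Summable.tsum_sub hS1 hS2]
    exact tsum_congr fun k => by ring
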